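/- Let B be an ordered branching program of length n and width w and H : {0,1}^s → {0,1}^n, and let q assign to every state of B a value in [0,1] such that q_v equals the {0,1}-label of v for every v ∈ V_n and q_v = (q_{B[v,0]} + q_{B[v,1]})/2 for every verified state v ∈ V_i with i < n (q may be arbitrary in [0,1] at unverified states). Then |q_{v_st} − E[B]| ≤ Pr_{x←U_n}[ the path B[v_st, x_{1..0}], B[v_st, x_{1..1}], ..., B[v_st, x_{1..n}] visits an unverified state ]. -/
import Mathlib


open Finset
open scoped Classical

/-- An ordered branching program of length `n` and width `w`: each layer's states
are identified with `Fin w`; `next i v b` is the successor of state `v` in layer `i`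
on bit `b`; states in the last layer are labeled by `label`. -/
structure OBP (n w : ℕ) where
  start : Fin w
  next : ℕ → Fin w → Bool → Fin w
  label : Fin w → Bool

namespace OBP

/-- The state reached from state `v` in layer `i` after reading `k` bits. -/
def walk {n w : ℕ} (B : OBP n w) : (k : ℕ) → (i : ℕ) → Fin w → (Fin k → Bool) → Fin w
  | 0, _, v, _ => v
  | k + 1, i, v, x => walk B k (i + 1) (B.next i v (x 0)) (fun j => x j.succ)

/-- The state in layer `i` reached from the start state on a length-`i` input. -/
def reach {n w : ℕ} (B : OBP n w) {i : ℕ} (x : Fin i → Bool) : Fin w :=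
  B.walk i 0 B.start x

/-- The boolean output of the program on an `n`-bit input. -/
def eval {n w : ℕ} (B : OBP n w) (x : Fin n → Bool) : Bool :=
  B.label (B.reach x)

end OBP

/-- Expectation of a real-valued function under the uniform distribution. -/
noncomputable def Exp {α : Type*} [Fintype α] (f : α → ℝ) : ℝ :=
  (∑ a, f a) / (Fintype.card α : ℝ)

/-- Probability of an event under the uniform distribution. -/
noncomputable def prob {α : Type*} [Fintype α] (p : α → Prop) : ℝ :=
  ((Finset.univ.filter p).card : ℝ) / (Fintype.card α : ℝ)

/-- A boolean viewed as a real number. -/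
def bval (b : Bool) : ℝ := if b then 1 else 0

/-- The first `k` bits of `x` (padded with `false` if `k > n`). -/
def bits {n : ℕ} (x : Fin n → Bool) (k : ℕ) : Fin k → Bool :=
  fun j => if h : (j : ℕ) < n then x ⟨j, h⟩ else false

/-- `p_{v→}`: the probability of acceptance starting from state `v` in layer `i`,
over a uniformly random suffix of length `n - i`. -/
noncomputable def pAcc {n w : ℕ} (B : OBP n w) (i : ℕ) (v : Fin w) : ℝ :=
  prob (fun r : Fin (n - i) → Bool => B.label (B.walk (n - i) i v r) = true)

/-- `H` is an `ε`-hitting set generator for all OBPs of length `n` and width `W`. -/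
noncomputable def IsHSG (n W s : ℕ) (H : (Fin s → Bool) → Fin n → Bool) (ε : ℝ) : Prop :=
  ∀ B' : OBP n W, ε ≤ Exp (fun x : Fin n → Bool => bval (B'.eval x)) →
    ∃ y : Fin s → Bool, B'.eval (H y) = true

/-- States `u` and `u'` in layer `i` are indistinguishable under `H`:
they behave identically on the length-`(n-i)` prefix of every output of `H`. -/
def Indist {n w s : ℕ} (B : OBP n w) (H : (Fin s → Bool) → Fin n → Bool)
    (i : ℕ) (u u' : Fin w) : Prop :=
  ∀ y : Fin s → Bool,
    B.walk (n - i) i u (bits (H y) (n - i)) = B.walk (n - i) i u' (bits (H y) (n - i))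

/-- `v_i(x)`: the state in layer `i` reached from the start
on the length-`i` prefix of `H x`. -/
def vAt {n w s : ℕ} (B : OBP n w) (H : (Fin s → Bool) → Fin n → Bool)
    (i : ℕ) (x : Fin s → Bool) : Fin w :=
  B.reach (bits (H x) i)

/-- A state `v` in layer `i < n` is unverified if one of its successors is not
reached (in layer `i+1`) by any output of `H`. -/
def Unverified {n w s : ℕ} (B : OBP n w) (H : (Fin s → Bool) → Fin n → Bool)
    (i : ℕ) (v : Fin w) : Prop :=
  i < n ∧ ∃ b : Bool, ∀ x' : Fin s → Bool, B.next i v b ≠ vAt B H (i + 1) x'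


/-- Indicator of a proposition as a real number. -/
noncomputable def ind (p : Prop) : ℝ := if p then (1:ℝ) else 0

lemma ind_nonneg (p : Prop) : 0 ≤ ind p := by unfold ind; split <;> norm_num
lemma ind_le_one (p : Prop) : ind p ≤ 1 := by unfold ind; split <;> norm_num
lemma bval_nonneg (b : Bool) : 0 ≤ bval b := by unfold bval; split <;> norm_num
lemma bval_le_one (b : Bool) : bval b ≤ 1 := by unfold bval; split <;> norm_num

lemma walk_snoc' {n w : ℕ} (B : OBP n w) :
    ∀ (k i : ℕ) (v : Fin w) (x : Fin (k+1) → Bool),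
      B.walk (k+1) i v x
        = B.next (i+k) (B.walk k i v (fun j => x j.castSucc)) (x (Fin.last k)) := by
  intro k
  induction k with
  | zero => intro i v x; simp [OBP.walk]
  | succ k ih =>
    intro i v x
    rw [show B.walk (k+1+1) i v x = B.walk (k+1) (i+1) (B.next i v (x 0)) (fun j => x j.succ) from rfl]
    rw [ih]
    rw [show (B.walk (k+1) i v fun j => x j.castSucc)
        = B.walk k (i+1) (B.next i v (x ((0:Fin (k+1)).castSucc))) (fun j => x (j.succ.castSucc)) from rfl]
    simp only [show i+1+k = i+(k+1) from by omega, Fin.succ_last, Fin.castSucc_zero,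
      Fin.succ_castSucc]

lemma reach_bits_succ' {n w : ℕ} (B : OBP n w) (x : Fin n → Bool) (i : ℕ) (hi : i < n) :
    B.reach (bits x (i+1)) = B.next i (B.reach (bits x i)) (x ⟨i, hi⟩) := by
  unfold OBP.reach
  rw [walk_snoc' B i 0 B.start (bits x (i+1))]
  have e0 : (0:ℕ)+i = i := by omega
  have ef : (fun j : Fin i => bits x (i+1) j.castSucc) = bits x i := by
    funext j; simp [bits]
  rw [e0, ef]
  congr 1
  simp [bits, hi]

lemma bits_self' {n : ℕ} (x : Fin n → Bool) : bits x n = x := by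
  funext j; simp [bits]

lemma bits_update' {n : ℕ} (x : Fin n → Bool) (i : ℕ) (hi : i < n) (b : Bool) (k : ℕ)
    (hk : k ≤ i) : bits (Function.update x ⟨i, hi⟩ b) k = bits x k := by
  funext j
  by_cases h : (j : ℕ) < n
  · simp only [bits, dif_pos h]
    exact Function.update_of_ne (Fin.ne_of_val_ne (by simp; omega)) _ _
  · simp only [bits, dif_neg h]

lemma sum_avg' {n : ℕ} (i : Fin n) (f : (Fin n → Bool) → Bool → ℝ)
    (hf : ∀ (x : Fin n → Bool) (b : Bool), f (Function.update x i b) = f x) :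
    ∑ x : Fin n → Bool, f x (x i) = ∑ x : Fin n → Bool, (f x false + f x true) / 2 := by
  have hinv : Function.Involutive (fun x : Fin n → Bool => Function.update x i (!(x i))) := by
    intro x
    funext j
    by_cases h : j = i <;> simp [h, Function.update_of_ne]
  let e := hinv.toPerm _
  have h2 : ∑ x : Fin n → Bool, f x (x i) = ∑ x : Fin n → Bool, f x (!(x i)) := by
    calc ∑ x : Fin n → Bool, f x (x i) = ∑ x : Fin n → Bool, f (e x) ((e x) i) :=
          (Equiv.sum_comp e (fun x => f x (x i))).symm
      _ = ∑ x : Fin n → Bool, f x (!(x i)) := by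
          refine Finset.sum_congr rfl fun x _ => ?_
          have h1 : e x = Function.update x i (!(x i)) := rfl
          rw [h1, hf, Function.update_self]
  have h3 : (2:ℝ) * ∑ x : Fin n → Bool, f x (x i) = ∑ x : Fin n → Bool, (f x false + f x true) := by
    rw [two_mul]
    nth_rewrite 2 [h2]
    rw [← Finset.sum_add_distrib]
    refine Finset.sum_congr rfl fun x _ => ?_
    cases hx : x i <;> simp [hx]
    ring
  rw [← Finset.sum_div, ← h3]; ring

theorem stmt17 {n w s : ℕ} (B : OBP n w)
    (H : (Fin s → Bool) → Fin n → Bool)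
    (q : ℕ → Fin w → ℝ)
    (hq01 : ∀ i : ℕ, i ≤ n → ∀ v : Fin w, q i v ∈ Set.Icc (0 : ℝ) 1)
    (hqn : ∀ v : Fin w, q n v = bval (B.label v))
    (hqver : ∀ i : ℕ, i < n → ∀ v : Fin w, ¬ Unverified B H i v →
      q i v = (q (i + 1) (B.next i v false) + q (i + 1) (B.next i v true)) / 2) :
    |q 0 B.start - Exp (fun x : Fin n → Bool => bval (B.eval x))| ≤
      prob (fun x : Fin n → Bool =>
        ∃ i : ℕ, Unverified B H i (B.reach (bits x i))) := by

  classical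
  set N : ℝ := (Fintype.card (Fin n → Bool) : ℝ) with hNdef
  have hNpos : 0 < N := by
    simp only [hNdef]
    exact_mod_cast Fintype.card_pos
  set G : ℕ → (Fin n → Bool) → Prop :=
    fun i x => ∀ j, j < i → ¬ Unverified B H j (B.reach (bits x j)) with hG
  set S : ℕ → ℝ :=
    fun i => ∑ x : Fin n → Bool, q i (B.reach (bits x i)) * ind (G i x) with hS
  set D : ℕ → ℝ :=
    fun i => ∑ x : Fin n → Bool,
      q i (B.reach (bits x i)) * ind (G i x ∧ Unverified B H i (B.reach (bits x i))) with hD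
  have hG_succ : ∀ (i : ℕ) (x : Fin n → Bool),
      G (i+1) x ↔ (G i x ∧ ¬ Unverified B H i (B.reach (bits x i))) := by
    intro i x
    constructor
    · intro h; exact ⟨fun j hj => h j (by omega), h i (by omega)⟩
    · rintro ⟨h1, h2⟩ j hj
      rcases Nat.lt_succ_iff_lt_or_eq.mp hj with h | h
      · exact h1 j h
      · subst h; exact h2
  have hS0 : S 0 = N * q 0 B.start := by
    have : ∀ x : Fin n → Bool, q 0 (B.reach (bits x 0)) * ind (G 0 x) = q 0 B.start := by
      intro x
      have h1 : B.reach (bits x 0) = B.start := rfl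
      have h2 : G 0 x := fun j hj => absurd hj (Nat.not_lt_zero j)
      rw [h1, show ind (G 0 x) = 1 from if_pos h2, mul_one]
    simp only [hS, this, Finset.sum_const, nsmul_eq_mul, hNdef, Finset.card_univ]
  have key : ∀ i, i < n → S i = D i + S (i+1) := by
    intro i hi
    have step1 : S (i+1) = ∑ x : Fin n → Bool,
        (fun (x : Fin n → Bool) (b : Bool) =>
          q (i+1) (B.next i (B.reach (bits x i)) b) * ind (G (i+1) x)) x (x ⟨i, hi⟩) := by
      simp only [hS]
      refine Finset.sum_congr rfl fun x _ => ?_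
      rw [reach_bits_succ' B x i hi]
    have hGstable : ∀ (x : Fin n → Bool) (b : Bool),
        G (i+1) (Function.update x ⟨i, hi⟩ b) = G (i+1) x := by
      intro x b
      have hbj : ∀ j, j ≤ i → bits (Function.update x ⟨i, hi⟩ b) j = bits x j :=
        fun j hj => bits_update' x i hi b j hj
      refine propext ⟨fun h j hj => ?_, fun h j hj => ?_⟩
      · rw [← hbj j (by omega)]; exact h j hj
      · rw [hbj j (by omega)]; exact h j hj
    have step2 : S (i+1) = ∑ x : Fin n → Bool,
        ((q (i+1) (B.next i (B.reach (bits x i)) false)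
          + q (i+1) (B.next i (B.reach (bits x i)) true)) / 2) * ind (G (i+1) x) := by
      rw [step1, sum_avg' (⟨i, hi⟩ : Fin n)
        (fun x b => q (i+1) (B.next i (B.reach (bits x i)) b) * ind (G (i+1) x))
        (fun x b => by simp only [bits_update' x i hi b i le_rfl, hGstable x b])]
      exact Finset.sum_congr rfl fun x _ => by ring
    have step3 : S (i+1) = ∑ x : Fin n → Bool,
        q i (B.reach (bits x i)) * ind (G (i+1) x) := by
      rw [step2]
      refine Finset.sum_congr rfl fun x _ => ?_
      by_cases hx : G (i+1) x
      · rw [hqver i hi (B.reach (bits x i)) ((hG_succ i x).mp hx).2]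
      · simp [ind, hx]
    rw [step3]
    simp only [hS, hD, ← Finset.sum_add_distrib]
    refine Finset.sum_congr rfl fun x _ => ?_
    have hsplit : ind (G i x)
        = ind (G i x ∧ Unverified B H i (B.reach (bits x i))) + ind (G (i+1) x) := by
      by_cases h1 : G i x <;> by_cases h2 : Unverified B H i (B.reach (bits x i)) <;>
        simp [ind, h1, h2, hG_succ i x]
    rw [hsplit]; ring
  have tele : ∀ m, m ≤ n → S 0 = (∑ i ∈ Finset.range m, D i) + S m := by
    intro m
    induction m with
    | zero => intro _; simp
    | succ m ih =>
      intro h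
      rw [Finset.sum_range_succ, ih (by omega), key m (by omega)]
      ring
  have hSn : S n = ∑ x : Fin n → Bool, bval (B.eval x) * ind (G n x) := by
    simp only [hS]
    refine Finset.sum_congr rfl fun x _ => ?_
    rw [bits_self' x, hqn]
    rfl
  have main : |S 0 - ∑ x : Fin n → Bool, bval (B.eval x)|
      ≤ ((Finset.univ.filter (fun x : Fin n → Bool =>
          ∃ i : ℕ, Unverified B H i (B.reach (bits x i)))).card : ℝ) := by
    have e1 : S 0 - ∑ x : Fin n → Bool, bval (B.eval x)
        = ∑ x : Fin n → Bool,
            ((∑ i ∈ Finset.range n, q i (B.reach (bits x i))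
                * ind (G i x ∧ Unverified B H i (B.reach (bits x i))))
              + bval (B.eval x) * ind (G n x) - bval (B.eval x)) := by
      rw [tele n le_rfl, hSn]
      simp only [hD]
      rw [Finset.sum_comm]
      rw [← Finset.sum_add_distrib, ← Finset.sum_sub_distrib]
    rw [e1]
    calc |∑ x : Fin n → Bool,
            ((∑ i ∈ Finset.range n, q i (B.reach (bits x i))
                * ind (G i x ∧ Unverified B H i (B.reach (bits x i))))
              + bval (B.eval x) * ind (G n x) - bval (B.eval x))|
        ≤ ∑ x : Fin n → Bool,
            |(∑ i ∈ Finset.range n, q i (B.reach (bits x i))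
                * ind (G i x ∧ Unverified B H i (B.reach (bits x i))))
              + bval (B.eval x) * ind (G n x) - bval (B.eval x)| :=
          Finset.abs_sum_le_sum_abs _ _
      _ ≤ ∑ x : Fin n → Bool,
            ind (∃ i : ℕ, Unverified B H i (B.reach (bits x i))) := by
          refine Finset.sum_le_sum fun x _ => ?_
          by_cases hb : ∃ i : ℕ, Unverified B H i (B.reach (bits x i))
          · have hGn : ¬ G n x := by
              intro hg
              obtain ⟨i, hU⟩ := hb
              exact hg i hU.1 hU
            have hT0 : 0 ≤ ∑ i ∈ Finset.range n, q i (B.reach (bits x i))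
                * ind (G i x ∧ Unverified B H i (B.reach (bits x i))) := by
              refine Finset.sum_nonneg fun i hi => ?_
              exact mul_nonneg (hq01 i (Finset.mem_range.mp hi).le _).1 (ind_nonneg _)
            have hT1 : (∑ i ∈ Finset.range n, q i (B.reach (bits x i))
                * ind (G i x ∧ Unverified B H i (B.reach (bits x i)))) ≤ 1 := by
              have hsub : ((Finset.range n).filter
                  (fun i => G i x ∧ Unverified B H i (B.reach (bits x i)))).card ≤ 1 := by
                refine Finset.card_le_one.mpr fun a ha b hb' => ?_
                obtain ⟨-, hA⟩ := Finset.mem_filter.mp ha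
                obtain ⟨-, hB⟩ := Finset.mem_filter.mp hb'
                by_contra hne
                rcases Nat.lt_or_ge a b with h | h
                · exact (hB.1 a h hA.2).elim
                · have : b < a := by omega
                  exact (hA.1 b this hB.2).elim
              calc (∑ i ∈ Finset.range n, q i (B.reach (bits x i))
                  * ind (G i x ∧ Unverified B H i (B.reach (bits x i))))
                  = ∑ i ∈ (Finset.range n).filter
                      (fun i => G i x ∧ Unverified B H i (B.reach (bits x i))),
                      q i (B.reach (bits x i)) := by
                    rw [Finset.sum_filter]
                    refine Finset.sum_congr rfl fun i _ => ?_
                    by_cases h : G i x ∧ Unverified B H i (B.reach (bits x i)) <;>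
                      simp [ind, h]
                _ ≤ ∑ i ∈ (Finset.range n).filter
                      (fun i => G i x ∧ Unverified B H i (B.reach (bits x i))), 1 := by
                    refine Finset.sum_le_sum fun i hi => ?_
                    have hin : i < n := Finset.mem_range.mp (Finset.mem_filter.mp hi).1
                    exact (hq01 i hin.le _).2
                _ ≤ 1 := by
                    rw [Finset.sum_const, nsmul_eq_mul, mul_one]
                    exact_mod_cast hsub
            have hbv0 := bval_nonneg (B.eval x)
            have hbv1 := bval_le_one (B.eval x)
            rw [show ind (G n x) = 0 from if_neg hGn,
              show ind (∃ i : ℕ, Unverified B H i (B.reach (bits x i))) = 1 from if_pos hb,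
              mul_zero, add_zero, abs_le]
            constructor <;> linarith
          · have hGn : G n x := fun j _ hU => hb ⟨j, hU⟩
            have hTz : (∑ i ∈ Finset.range n, q i (B.reach (bits x i))
                * ind (G i x ∧ Unverified B H i (B.reach (bits x i)))) = 0 := by
              refine Finset.sum_eq_zero fun i _ => ?_
              have : ¬ (G i x ∧ Unverified B H i (B.reach (bits x i))) :=
                fun h => hb ⟨i, h.2⟩
              simp [ind, this]
            rw [hTz, zero_add, show ind (G n x) = 1 from if_pos hGn,
              show ind (∃ i : ℕ, Unverified B H i (B.reach (bits x i))) = 0 from if_neg hb,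
              mul_one, sub_self, abs_zero]
      _ = ((Finset.univ.filter (fun x : Fin n → Bool =>
            ∃ i : ℕ, Unverified B H i (B.reach (bits x i)))).card : ℝ) := by
          simp [ind, Finset.sum_boole]
  have hq0 : q 0 B.start = S 0 / N := by
    rw [hS0]; field_simp
  simp only [Exp, prob]
  rw [← hNdef, hq0, div_sub_div_same, abs_div, abs_of_pos hNpos]
  gcongr
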